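/- arXiv:2603.15063 — 9 statements merged into one kernel-verified Lean document; each statement's English description precedes it below -/
import Mathlib

section
/- Let ℐ = C ⊕ [±Δ] be an interval matrix of size l×p (Δ ≥ 0 entrywise) and let ℳ = ⟨M; G_1,…,G_g⟩ be a matrix zonotope of size p×q. Then the product set ℐℳ = {IN : I ∈ ℐ, N ∈ ℳ} is contained in the matrix zonotope 𝕋_ℐ(ℳ) = ⟨CM; CG_1,…,CG_g, F^(1),…,F^(lq)⟩, where F = Δ(|M| + Σ_{j=1}^g |G_j|) and (F^(k))_k = E(F). -/
open Matrix Finset Pointwise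

noncomputable section

/-- entrywise absolute value of a real matrix -/
def matAbs {ι κ : Type*} (M : Matrix ι κ ℝ) : Matrix ι κ ℝ := fun i j => |M i j|

/-- interval matrix `C ⊕ [±Δ] = {C + D : |D| ≤ Δ}` -/
def intervalMat {ι κ : Type*} (C Δ : Matrix ι κ ℝ) : Set (Matrix ι κ ℝ) :=
  {X | ∀ i j, |X i j - C i j| ≤ Δ i j}

/-- representation of a matrix zonotope: a center and a list of generators -/
structure ZRep (ι κ : Type*) where
  c : Matrix ι κ ℝ
  g : List (Matrix ι κ ℝ)

/-- the set of matrices described by a matrix zonotope representation -/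
def ZRep.set {ι κ : Type*} (Z : ZRep ι κ) : Set (Matrix ι κ ℝ) :=
  {X | ∃ β : Fin Z.g.length → ℝ, (∀ i, |β i| ≤ 1) ∧ X = Z.c + ∑ i, β i • Z.g.get i}

/-- interval hull `box(⟨M;G⟩) = M ⊕ [± Σ |G_i|]` of a matrix zonotope -/
def ZRep.box {ι κ : Type*} (Z : ZRep ι κ) : Set (Matrix ι κ ℝ) :=
  intervalMat Z.c ((Z.g.map matAbs).sum)

/-- the family `E(F)` of single-entry matrices, as a list -/
def EList {ι κ : Type*} [Fintype ι] [Fintype κ] [DecidableEq ι] [DecidableEq κ]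
    (F : Matrix ι κ ℝ) : List (Matrix ι κ ℝ) :=
  (Finset.univ : Finset (ι × κ)).toList.map fun p => Matrix.single p.1 p.2 (F p.1 p.2)

/-- the operator `𝕋_ℐ` (for `ℐ = C ⊕ [±Δ]`) acting on zonotope representations:
`𝕋_ℐ(⟨M;G₁,…,G_g⟩) = ⟨CM; CG₁,…,CG_g, E(Δ(|M|+Σ|G_i|))⟩` -/
def Tstep {ι κ μ : Type*} [Fintype ι] [Fintype κ] [Fintype μ] [DecidableEq ι] [DecidableEq μ]
    (C Δ : Matrix ι κ ℝ) (Z : ZRep κ μ) : ZRep ι μ :=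
  ⟨C * Z.c, Z.g.map (fun G => C * G) ++ EList (Δ * (matAbs Z.c + (Z.g.map matAbs).sum))⟩

/-- membership in the zonotope represented by an appended generator list -/
lemma mem_append_set_aux {ι κ : Type*} (c : Matrix ι κ ℝ) (l1 l2 : List (Matrix ι κ ℝ))
    (β1 : Fin l1.length → ℝ) (β2 : Fin l2.length → ℝ)
    (h1 : ∀ i, |β1 i| ≤ 1) (h2 : ∀ i, |β2 i| ≤ 1) :
    ∃ β : Fin (l1 ++ l2).length → ℝ, (∀ i, |β i| ≤ 1) ∧
      c + (∑ i, β1 i • l1.get i + ∑ i, β2 i • l2.get i)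
        = c + ∑ i, β i • (l1 ++ l2).get i := by
  have hlen : (l1 ++ l2).length = l1.length + l2.length := List.length_append
  have key : ∀ j : Fin (l1.length + l2.length),
      |Fin.addCases (motive := fun _ => ℝ) β1 β2 j| ≤ 1 := by
    intro j
    refine Fin.addCases (fun k => ?_) (fun k => ?_) j
    · simpa using h1 k
    · simpa using h2 k
  refine ⟨fun i => Fin.addCases β1 β2 (Fin.cast hlen i), fun i => key _, ?_⟩
  congr 1
  have hget : ∀ j : Fin (l1.length + l2.length), (j : ℕ) < (l1 ++ l2).length := by
    intro j; omega
  have := Fin.sum_univ_add (f := fun j : Fin (l1.length + l2.length) =>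
    (Fin.addCases (motive := fun _ => ℝ) β1 β2 j) • (l1 ++ l2)[(j : ℕ)]'(hget j))
  rw [Fintype.sum_equiv (finCongr hlen)
    (fun i => (Fin.addCases (motive := fun _ => ℝ) β1 β2 (Fin.cast hlen i)) • (l1 ++ l2).get i)
    (fun j : Fin (l1.length + l2.length) =>
      (Fin.addCases (motive := fun _ => ℝ) β1 β2 j) • (l1 ++ l2)[(j : ℕ)]'(hget j))
    (fun i => rfl)]
  rw [this]
  congr 1
  · apply Finset.sum_congr rfl
    intro j _
    rw [Fin.addCases_left]
    congr 1
    exact (List.getElem_append_left j.isLt).symm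
  · apply Finset.sum_congr rfl
    intro j _
    rw [Fin.addCases_right]
    congr 1
    rw [List.getElem_append_right (by simp)]
    congr 1
    simp

/-- Proposition 1: `ℐℳ ⊆ 𝕋_ℐ(ℳ)`. -/
theorem stmt0 {l p q : ℕ} (C Δ : Matrix (Fin l) (Fin p) ℝ) (hΔ : ∀ i j, 0 ≤ Δ i j)
    (Z : ZRep (Fin p) (Fin q)) :
    {X : Matrix (Fin l) (Fin q) ℝ | ∃ I ∈ intervalMat C Δ, ∃ N ∈ Z.set, X = I * N} ⊆
      (Tstep C Δ Z).set := by
  rintro X ⟨I, hI, N, ⟨β, hβ, rfl⟩, rfl⟩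
  obtain ⟨Zc, Zg⟩ := Z
  simp only at hβ ⊢
  set N : Matrix (Fin p) (Fin q) ℝ := Zc + ∑ i, β i • Zg.get i with hN
  set D : Matrix (Fin l) (Fin p) ℝ := I - C with hD
  set B : Matrix (Fin p) (Fin q) ℝ := matAbs Zc + (Zg.map matAbs).sum with hB
  set F : Matrix (Fin l) (Fin q) ℝ := Δ * B with hF
  -- entrywise bound on the list sum
  have hsum_apply : ∀ (k : Fin p) (b : Fin q),
      ((Zg.map matAbs).sum) k b = ∑ i : Fin Zg.length, |Zg.get i k b| := by
    intro k b
    rw [← Fin.sum_univ_getElem (Zg.map matAbs), Matrix.sum_apply]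
    refine Fintype.sum_equiv (finCongr (List.length_map (as := Zg) matAbs)) _ _ (fun i => ?_)
    simp [List.getElem_map, matAbs, List.get_eq_getElem]
  have hNbound : ∀ k b, |N k b| ≤ B k b := by
    intro k b
    have h1 : N k b = Zc k b + ∑ i, β i * Zg.get i k b := by
      simp [hN, Matrix.add_apply, Matrix.sum_apply, Matrix.smul_apply, smul_eq_mul]
    rw [h1, hB]
    calc |Zc k b + ∑ i, β i * Zg.get i k b|
        ≤ |Zc k b| + |∑ i, β i * Zg.get i k b| := abs_add_le _ _
      _ ≤ |Zc k b| + ∑ i, |β i * Zg.get i k b| :=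
          add_le_add_right (Finset.abs_sum_le_sum_abs _ _) _
      _ ≤ |Zc k b| + ∑ i, |Zg.get i k b| := by
          apply add_le_add_right
          apply Finset.sum_le_sum
          intro i _
          rw [abs_mul]
          exact mul_le_of_le_one_left (abs_nonneg _) (hβ i)
      _ = (matAbs Zc + (Zg.map matAbs).sum) k b := by
          rw [Matrix.add_apply, hsum_apply k b]; rfl
  have hDbound : ∀ a k, |D a k| ≤ Δ a k := fun a k => hI a k
  have hDN : ∀ a b, |(D * N) a b| ≤ F a b := by
    intro a b
    rw [hF, Matrix.mul_apply, Matrix.mul_apply]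
    calc |∑ k, D a k * N k b| ≤ ∑ k, |D a k * N k b| := Finset.abs_sum_le_sum_abs _ _
      _ ≤ ∑ k, Δ a k * B k b := by
          apply Finset.sum_le_sum
          intro k _
          rw [abs_mul]
          exact mul_le_mul (hDbound a k) (hNbound k b) (abs_nonneg _) (hΔ a k)
  -- write `D * N` as a combination of single-entry matrices
  have hDNrep : ∃ γ : Fin l × Fin q → ℝ, (∀ pr, |γ pr| ≤ 1) ∧
      D * N = ∑ pr : Fin l × Fin q, γ pr • single pr.1 pr.2 (F pr.1 pr.2) := by
    refine ⟨fun pr => if F pr.1 pr.2 = 0 then 0 else (D * N) pr.1 pr.2 / F pr.1 pr.2, ?_, ?_⟩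
    · intro pr
      by_cases h : F pr.1 pr.2 = 0
      · simp [h]
      · have hpos : 0 < F pr.1 pr.2 :=
          lt_of_le_of_ne (le_trans (abs_nonneg _) (hDN pr.1 pr.2)) (Ne.symm h)
        simp only [h, if_false, abs_div, abs_of_pos hpos]
        rw [div_le_one hpos]
        exact hDN pr.1 pr.2
    · ext a b
      rw [Matrix.sum_apply]
      rw [Finset.sum_eq_single (a, b)]
      · by_cases h : F a b = 0
        · have : |(D * N) a b| ≤ 0 := h ▸ hDN a b
          have h0 : (D * N) a b = 0 := abs_nonpos_iff.mp this
          simp [h, h0, Matrix.smul_apply, Matrix.single, Matrix.of_apply]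
        · simp only [h, if_false, Matrix.smul_apply, Matrix.single, Matrix.of_apply]
          simp [div_mul_cancel₀ _ h]
      · intro pr _ hpr
        have : ¬(pr.1 = a ∧ pr.2 = b) := by
          intro ⟨h1, h2⟩; exact hpr (Prod.ext h1 h2)
        simp [Matrix.smul_apply, Matrix.single, Matrix.of_apply, this]
      · intro h; exact absurd (Finset.mem_univ _) h
  obtain ⟨γ, hγ1, hγ2⟩ := hDNrep
  -- the two generator lists
  set l1 : List (Matrix (Fin l) (Fin q) ℝ) := Zg.map (fun G => C * G) with hl1
  set l2 : List (Matrix (Fin l) (Fin q) ℝ) := EList F with hl2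
  -- coefficients for `l1`
  set β1 : Fin l1.length → ℝ :=
    fun i => β (Fin.cast (by rw [hl1, List.length_map]) i) with hβ1
  have hβ1le : ∀ i, |β1 i| ≤ 1 := fun i => hβ _
  have hsum1 : ∑ i, β1 i • l1.get i = ∑ i : Fin Zg.length, β i • (C * Zg.get i) := by
    refine Fintype.sum_equiv (finCongr (by rw [hl1, List.length_map])) _ _ (fun i => ?_)
    simp only [hβ1, hl1, List.get_eq_getElem, List.getElem_map]
    rfl
  -- coefficients for `l2`
  set γL : Fin l2.length → ℝ :=
    fun i => γ ((Finset.univ : Finset (Fin l × Fin q)).toList.get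
      (Fin.cast (by rw [hl2, EList, List.length_map]) i)) with hγL
  have hγLle : ∀ i, |γL i| ≤ 1 := fun i => hγ1 _
  have hsum2 : ∑ i, γL i • l2.get i
      = ∑ pr : Fin l × Fin q, γ pr • single pr.1 pr.2 (F pr.1 pr.2) := by
    have step1 : ∑ i, γL i • l2.get i
        = ∑ j : Fin (Finset.univ : Finset (Fin l × Fin q)).toList.length,
            (fun pr : Fin l × Fin q => γ pr • single pr.1 pr.2 (F pr.1 pr.2))
              ((Finset.univ : Finset (Fin l × Fin q)).toList.get j) := by
      refine Fintype.sum_equiv (finCongr (by rw [hl2, EList, List.length_map])) _ _ (fun i => ?_)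
      simp only [hγL, hl2, EList, List.get_eq_getElem, List.getElem_map, finCongr_apply]
      rfl
    rw [step1]
    have step2 : (∑ j : Fin (Finset.univ : Finset (Fin l × Fin q)).toList.length,
          (fun pr : Fin l × Fin q => γ pr • single pr.1 pr.2 (F pr.1 pr.2))
            ((Finset.univ : Finset (Fin l × Fin q)).toList.get j))
        = ((Finset.univ : Finset (Fin l × Fin q)).toList.map
            (fun pr : Fin l × Fin q => γ pr • single pr.1 pr.2 (F pr.1 pr.2))).sum := by
      rw [← Fin.sum_univ_getElem]
      refine Fintype.sum_equiv (finCongr (by rw [List.length_map])).symm _ _ (fun i => ?_)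
      simp [List.get_eq_getElem, List.getElem_map]
    rw [step2]
    exact Finset.sum_map_toList _ _
  -- assemble
  have hdecomp : I * N
      = C * Zc + (∑ i, β1 i • l1.get i + ∑ i, γL i • l2.get i) := by
    have hIN : I * N = C * N + D * N := by
      rw [hD]; rw [Matrix.sub_mul]; noncomm_ring
    have hCN : C * N = C * Zc + ∑ i : Fin Zg.length, β i • (C * Zg.get i) := by
      rw [hN, Matrix.mul_add, Matrix.mul_sum]
      congr 1
      refine Finset.sum_congr rfl (fun i _ => ?_)
      rw [Matrix.mul_smul]
    rw [hIN, hCN, hγ2, hsum1, hsum2, add_assoc]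
  obtain ⟨βfull, hβfull, heq⟩ := mem_append_set_aux (C * Zc) l1 l2 β1 γL hβ1le hγLle
  exact ⟨βfull, hβfull, hdecomp.trans heq⟩
end
end

section
/- Let ℐ = C ⊕ [±Δ] be a square interval matrix of size p×p (Δ ≥ 0 entrywise) and let ℳ be a matrix zonotope of size p×q. Then for every j ≥ 1, the set ℐ^j ℳ = {I^j N : I ∈ ℐ, N ∈ ℳ} is contained in 𝕋_ℐ^j(ℳ), the j-fold iterate of the operator 𝕋_ℐ applied to ℳ (at each step 𝕋_ℐ is applied to the zonotope representation produced by the previous step). -/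
open Matrix Finset Pointwise

noncomputable section

/- ------------------- auxiliary lemmas ------------------- -/

lemma sum_fin_get {α M : Type*} [AddCommMonoid M] (l : List α) (h : α → M) :
    ∑ i : Fin l.length, h (l.get i) = (l.map h).sum := by
  induction l with
  | nil => simp
  | cons a t ih => simp [Fin.sum_univ_succ, ih]

lemma listSum_apply {ι κ : Type*} (L : List (Matrix ι κ ℝ)) (i : ι) (j : κ) :
    L.sum i j = (L.map fun M => M i j).sum := by
  induction L with
  | nil => simp [Matrix.zero_apply]
  | cons a t ih => simp [Matrix.add_apply, ih]

lemma mem_set_append {ι κ : Type*} {c : Matrix ι κ ℝ} {l₁ l₂ : List (Matrix ι κ ℝ)}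
    {X : Matrix ι κ ℝ}
    (β₁ : Fin l₁.length → ℝ) (β₂ : Fin l₂.length → ℝ)
    (h₁ : ∀ i, |β₁ i| ≤ 1) (h₂ : ∀ i, |β₂ i| ≤ 1)
    (hX : X = c + ((∑ i, β₁ i • l₁.get i) + ∑ i, β₂ i • l₂.get i)) :
    X ∈ (ZRep.mk c (l₁ ++ l₂)).set := by
  refine ⟨fun k => Fin.addCases (motive := fun _ => ℝ) β₁ β₂
      (Fin.cast (List.length_append : (l₁ ++ l₂).length = l₁.length + l₂.length) k), ?_, ?_⟩
  · intro k
    refine Fin.addCases (motive := fun j =>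
      |Fin.addCases (motive := fun _ => ℝ) β₁ β₂ j| ≤ 1) ?_ ?_ _
    · intro i; rw [Fin.addCases_left]; exact h₁ i
    · intro i; rw [Fin.addCases_right]; exact h₂ i
  · rw [hX]
    congr 1
    have e := Equiv.sum_comp (finCongr (List.length_append : (l₁ ++ l₂).length = l₁.length + l₂.length).symm)
      (fun k : Fin (l₁ ++ l₂).length =>
        Fin.addCases (motive := fun _ => ℝ) β₁ β₂ (Fin.cast (List.length_append : (l₁ ++ l₂).length = l₁.length + l₂.length) k)
          • (l₁ ++ l₂).get k)
    rw [← e, Fin.sum_univ_add]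
    congr 1
    · apply Finset.sum_congr rfl
      intro i _
      have hc : Fin.cast (List.length_append : (l₁ ++ l₂).length = l₁.length + l₂.length)
          (finCongr (List.length_append : (l₁ ++ l₂).length = l₁.length + l₂.length).symm (Fin.castAdd l₂.length i))
          = Fin.castAdd l₂.length i := by
        simp [Fin.ext_iff]
      rw [hc, Fin.addCases_left]
      congr 1
      simp [List.getElem_append_left]
    · apply Finset.sum_congr rfl
      intro i _
      have hc : Fin.cast (List.length_append : (l₁ ++ l₂).length = l₁.length + l₂.length)
          (finCongr (List.length_append : (l₁ ++ l₂).length = l₁.length + l₂.length).symm (Fin.natAdd l₁.length i))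
          = Fin.natAdd l₁.length i := by
        simp [Fin.ext_iff]
      rw [hc, Fin.addCases_right]
      congr 1
      simp [List.getElem_append_right]

lemma Tstep_mem {p q : ℕ} (C Δ : Matrix (Fin p) (Fin p) ℝ) (hΔ : ∀ i j, 0 ≤ Δ i j)
    (Z : ZRep (Fin p) (Fin q)) {I N : Matrix _ _ ℝ}
    (hI : I ∈ intervalMat C Δ) (hN : N ∈ Z.set) :
    I * N ∈ (Tstep C Δ Z).set := by
  obtain ⟨β, hβ, hNeq⟩ := hN
  set D : Matrix (Fin p) (Fin p) ℝ := I - C with hDdef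
  have hD : ∀ i j, |D i j| ≤ Δ i j := hI
  set B : Matrix (Fin p) (Fin q) ℝ := matAbs Z.c + (Z.g.map matAbs).sum with hBdef
  set F : Matrix (Fin p) (Fin q) ℝ := Δ * B with hFdef
  -- entrywise bound on N
  have hNb : ∀ k b, |N k b| ≤ B k b := by
    intro k b
    have hsum : (∑ i, β i • Z.g.get i) k b = ∑ i, β i * Z.g.get i k b := by
      rw [Matrix.sum_apply]; simp [Matrix.smul_apply]
    have h1 : |N k b| ≤ |Z.c k b| + |∑ i, β i * Z.g.get i k b| := by
      rw [hNeq, Matrix.add_apply, hsum]; exact abs_add_le _ _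
    have h2 : |∑ i, β i * Z.g.get i k b| ≤ ∑ i, |Z.g.get i k b| := by
      refine (Finset.abs_sum_le_sum_abs _ _).trans ?_
      apply Finset.sum_le_sum
      intro i _
      rw [abs_mul]
      calc |β i| * |Z.g.get i k b| ≤ 1 * |Z.g.get i k b| := by
            apply mul_le_mul_of_nonneg_right (hβ i) (abs_nonneg _)
        _ = |Z.g.get i k b| := one_mul _
    have h3 : (Z.g.map matAbs).sum k b = ∑ i, |Z.g.get i k b| := by
      rw [listSum_apply, List.map_map]
      rw [show ((fun M => M k b) ∘ matAbs) = fun G : Matrix (Fin p) (Fin q) ℝ => |G k b| from rfl]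
      rw [← sum_fin_get Z.g (fun G => |G k b|)]
    calc |N k b| ≤ |Z.c k b| + |∑ i, β i * Z.g.get i k b| := h1
      _ ≤ |Z.c k b| + ∑ i, |Z.g.get i k b| := by linarith
      _ = B k b := by rw [hBdef, Matrix.add_apply, h3]; rfl
  have hBnn : ∀ k b, 0 ≤ B k b := fun k b => le_trans (abs_nonneg _) (hNb k b)
  -- entrywise bound on D * N
  have hDNb : ∀ a b, |(D * N) a b| ≤ F a b := by
    intro a b
    rw [Matrix.mul_apply, hFdef, Matrix.mul_apply]
    refine (Finset.abs_sum_le_sum_abs _ _).trans ?_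
    apply Finset.sum_le_sum
    intro k _
    rw [abs_mul]
    exact mul_le_mul (hD a k) (hNb k b) (abs_nonneg _) (hΔ a k)
  -- coefficients for the E-part
  set g : Fin p × Fin q → ℝ :=
    fun pr => if F pr.1 pr.2 = 0 then 0 else (D * N) pr.1 pr.2 / F pr.1 pr.2 with hgdef
  have hg1 : ∀ pr, |g pr| ≤ 1 := by
    intro pr
    rw [hgdef]
    by_cases h : F pr.1 pr.2 = 0
    · simp [h]
    · have hFpos : 0 < F pr.1 pr.2 :=
        lt_of_le_of_ne (le_trans (abs_nonneg _) (hDNb pr.1 pr.2)) (Ne.symm h)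
      simp only [h, if_false]
      rw [abs_div, abs_of_pos hFpos, div_le_one hFpos]
      exact hDNb pr.1 pr.2
  have hg2 : ∀ pr : Fin p × Fin q, g pr * F pr.1 pr.2 = (D * N) pr.1 pr.2 := by
    intro pr
    rw [hgdef]
    by_cases h : F pr.1 pr.2 = 0
    · have : |(D * N) pr.1 pr.2| ≤ 0 := h ▸ hDNb pr.1 pr.2
      have : (D * N) pr.1 pr.2 = 0 := abs_nonpos_iff.mp this
      simp [h, this]
    · simp only [if_neg h]; exact div_mul_cancel₀ _ h
  -- the E-part sums to D * N
  have hEsum : ∑ pr : Fin p × Fin q, g pr • single pr.1 pr.2 (F pr.1 pr.2) = D * N := by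
    ext a b
    rw [Matrix.sum_apply]
    rw [Finset.sum_eq_single (a, b)]
    · rw [Matrix.smul_apply, Matrix.single_apply_same, smul_eq_mul]
      exact hg2 (a, b)
    · intro pr _ hpr
      rw [Matrix.smul_apply, smul_eq_mul]
      have : single pr.1 pr.2 (F pr.1 pr.2) a b = 0 := by
        apply Matrix.single_apply_of_ne
        intro hc
        exact hpr (Prod.ext hc.1 hc.2)
      rw [this, mul_zero]
    · intro h; exact absurd (Finset.mem_univ _) h
  -- lengths
  have hlen : (EList F).length = (Finset.univ : Finset (Fin p × Fin q)).toList.length := by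
    simp [EList]
  -- β₂ and its sum
  set β₂ : Fin (EList F).length → ℝ :=
    fun k => g ((Finset.univ : Finset (Fin p × Fin q)).toList.get (Fin.cast hlen k)) with hβ₂def
  have hβ₂sum : ∑ k, β₂ k • (EList F).get k = D * N := by
    have e := Equiv.sum_comp (finCongr hlen.symm)
      (fun k : Fin (EList F).length => β₂ k • (EList F).get k)
    rw [← e]
    have step : ∀ j : Fin (Finset.univ : Finset (Fin p × Fin q)).toList.length,
        β₂ (finCongr hlen.symm j) • (EList F).get (finCongr hlen.symm j)
          = (fun pr => g pr • single pr.1 pr.2 (F pr.1 pr.2))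
              ((Finset.univ : Finset (Fin p × Fin q)).toList.get j) := by
      intro j
      have h1 : Fin.cast hlen (finCongr hlen.symm j) = j := by simp [Fin.ext_iff]
      have h2 : (EList F).get (finCongr hlen.symm j)
          = single ((Finset.univ : Finset (Fin p × Fin q)).toList.get j).1
              ((Finset.univ : Finset (Fin p × Fin q)).toList.get j).2
              (F ((Finset.univ : Finset (Fin p × Fin q)).toList.get j).1
                 ((Finset.univ : Finset (Fin p × Fin q)).toList.get j).2) := by
        simp [EList, List.getElem_map]; rfl
      rw [hβ₂def]
      simp only [h1, h2]
    rw [Finset.sum_congr rfl (fun j _ => step j)]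
    rw [sum_fin_get (Finset.univ : Finset (Fin p × Fin q)).toList (fun pr => g pr • single pr.1 pr.2 (F pr.1 pr.2)), Finset.sum_map_toList]
    exact hEsum
  -- β₁ and its sum
  have hlen1 : (Z.g.map fun G => C * G).length = Z.g.length := List.length_map _
  set β₁ : Fin (Z.g.map fun G => C * G).length → ℝ := fun i => β (Fin.cast hlen1 i) with hβ₁def
  have hβ₁sum : ∑ i, β₁ i • (Z.g.map fun G => C * G).get i
      = ∑ i, β i • (C * Z.g.get i) := by
    have e := Equiv.sum_comp (finCongr hlen1.symm)
      (fun i : Fin (Z.g.map fun G => C * G).length => β₁ i • (Z.g.map fun G => C * G).get i)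
    rw [← e]
    apply Finset.sum_congr rfl
    intro i _
    have h1 : Fin.cast hlen1 (finCongr hlen1.symm i) = i := by simp [Fin.ext_iff]
    have h2 : (Z.g.map fun G => C * G).get (finCongr hlen1.symm i) = C * Z.g.get i := by
      simp [List.getElem_map]
    rw [hβ₁def]
    simp only [h1, h2]
  -- decomposition of I * N
  have hIN : I * N = C * Z.c + ((∑ i, β₁ i • (Z.g.map fun G => C * G).get i)
      + ∑ k, β₂ k • (EList F).get k) := by
    rw [hβ₁sum, hβ₂sum]
    have hCN : C * N = C * Z.c + ∑ i, β i • (C * Z.g.get i) := by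
      rw [hNeq, Matrix.mul_add, Matrix.mul_sum]
      congr 1
      apply Finset.sum_congr rfl
      intro i _
      rw [Matrix.mul_smul]
    have : I * N = C * N + D * N := by
      rw [hDdef, Matrix.sub_mul]; abel
    rw [this, hCN, add_assoc]
  exact mem_set_append β₁ β₂ (fun i => hβ (Fin.cast hlen1 i)) (fun k => hg1 _) hIN


/-- `ℐ^j ℳ ⊆ 𝕋_ℐ^j(ℳ)` for every `j ≥ 1`. -/
theorem stmt1 {p q : ℕ} (C Δ : Matrix (Fin p) (Fin p) ℝ) (hΔ : ∀ i j, 0 ≤ Δ i j)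
    (Z : ZRep (Fin p) (Fin q)) :
    ∀ j : ℕ, 1 ≤ j →
      {X : Matrix (Fin p) (Fin q) ℝ | ∃ I ∈ intervalMat C Δ, ∃ N ∈ Z.set, X = I ^ j * N} ⊆
        ((Tstep C Δ)^[j] Z).set := by

  intro j
  induction j with
  | zero => intro h; omega
  | succ n ih =>
    intro _ X hX
    obtain ⟨I, hI, N, hN, hXeq⟩ := hX
    rcases Nat.eq_zero_or_pos n with hn | hn
    · subst hn
      rw [Function.iterate_one]
      have : X = I * N := by rw [hXeq, pow_one]
      rw [this]
      exact Tstep_mem C Δ hΔ Z hI hN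
    · have hY : I ^ n * N ∈ ((Tstep C Δ)^[n] Z).set :=
        ih hn ⟨I, hI, N, hN, rfl⟩
      have : X = I * (I ^ n * N) := by
        rw [hXeq, pow_succ']
        rw [Matrix.mul_assoc]
      rw [this, Function.iterate_succ_apply']
      exact Tstep_mem C Δ hΔ _ hI hY
end
end

section
/- Data-driven interval bound on the system matrices: let Φ ∈ ℝ^{(n+m)×T}, X₊ ∈ ℝ^{n×T}, w̄ ∈ ℝ^n with w̄ ≥ 0, and suppose Ψ ∈ ℝ^{T×(n+m)} is a right inverse of Φ, i.e. ΦΨ = I_{n+m}. If Θ ∈ ℝ^{n×(n+m)} satisfies |X₊ − ΘΦ| ≤ w̄ 𝟙ᵀ entrywise (𝟙 ∈ ℝ^T the all-ones vector), then |Θ − X₊Ψ| ≤ w̄ 𝟙ᵀ |Ψ| entrywise; equivalently, every Θ compatible with the data lies in the interval matrix X₊Ψ ⊕ [±Δ_S] with Δ_S = w̄ 𝟙ᵀ |Ψ|. -/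
open Matrix Finset Pointwise

noncomputable section

/-- Proposition 2: every `Θ` compatible with the data lies in the
interval matrix `X₊Ψ ⊕ [±Δ_S]` with `Δ_S = w̄ 𝟙ᵀ |Ψ|`. -/
theorem stmt2 {n m T : ℕ} (Φ : Matrix (Fin (n + m)) (Fin T) ℝ)
    (Xp : Matrix (Fin n) (Fin T) ℝ) (wbar : Fin n → ℝ) (hw : ∀ i, 0 ≤ wbar i)
    (Ψ : Matrix (Fin T) (Fin (n + m)) ℝ) (hΨ : Φ * Ψ = 1)
    (Θ : Matrix (Fin n) (Fin (n + m)) ℝ)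
    (hΘ : ∀ i j, |(Xp - Θ * Φ) i j| ≤ wbar i) :
    Θ ∈ intervalMat (Xp * Ψ) (fun i j => wbar i * ∑ k, |Ψ k j|) := by
  intro i j
  have key : Θ i j - (Xp * Ψ) i j = ((Θ * Φ - Xp) * Ψ) i j := by
    have : Θ * Φ * Ψ = Θ := by rw [Matrix.mul_assoc, hΨ, Matrix.mul_one]
    rw [Matrix.sub_mul, this]
    simp [Matrix.sub_apply]
  rw [key]
  calc |((Θ * Φ - Xp) * Ψ) i j| ≤ ∑ k, |(Θ * Φ - Xp) i k * Ψ k j| := by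
        rw [Matrix.mul_apply]; exact Finset.abs_sum_le_sum_abs _ _
    _ ≤ ∑ k, wbar i * |Ψ k j| := by
        apply Finset.sum_le_sum
        intro k _
        rw [abs_mul]
        have h := hΘ i k
        have h2 : |(Θ * Φ - Xp) i k| ≤ wbar i := by
          simp only [Matrix.sub_apply] at h ⊢
          rwa [abs_sub_comm]
        exact mul_le_mul_of_nonneg_right h2 (abs_nonneg _)
    _ = wbar i * ∑ k, |Ψ k j| := by rw [Finset.mul_sum]
end
end

section
/- Let Â ∈ ℝ^{n×n}, let Δ_K ∈ ℝ^{n×n} and Δ_S ∈ ℝ^{n×p} with Δ_K ≥ 0 and Δ_S ≥ 0 entrywise, and define F_0 = Δ_S and F_{j+1} = Δ_K Σ_{i=0}^{j} |Â^{j−i}| F_i for j ≥ 0. Let ℐ_A = Â ⊕ [±Δ_K] and let ℐ_Δ be the matrix zonotope ⟨0; E(Δ_S)⟩. Then for every j ≥ 0 the interval hull of the j-fold iterate satisfies box(𝕋_{ℐ_A}^j(ℐ_Δ)) = [± Σ_{i=0}^{j} |Â^{j−i}| F_i ] (equality of sets of n×p matrices). -/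
open Matrix Finset Pointwise

noncomputable section

lemma matAbs_zero {ι κ : Type*} : matAbs (0 : Matrix ι κ ℝ) = 0 := by
  funext i j; simp [matAbs]

lemma matAbs_mul_stdBasis {n m p : ℕ} (B : Matrix (Fin n) (Fin m) ℝ) (k : Fin m) (l : Fin p)
    (v : ℝ) (hv : 0 ≤ v) :
    matAbs (B * Matrix.single k l v) = matAbs B * Matrix.single k l v := by
  funext a b
  simp only [matAbs, Matrix.mul_apply, Matrix.single, Matrix.of_apply, ite_and, mul_ite,
    mul_zero]
  by_cases hb : l = b
  · simp [hb, Finset.sum_ite_eq, abs_mul, abs_of_nonneg hv]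
  · simp [hb]

lemma sum_EList_abs_mul {n m p : ℕ} (B : Matrix (Fin n) (Fin m) ℝ)
    (M : Matrix (Fin m) (Fin p) ℝ) (hM : ∀ i j, 0 ≤ M i j) :
    (((EList M).map (fun G => matAbs (B * G))).sum) = matAbs B * M := by
  unfold EList
  rw [List.map_map]
  have : ((fun G => matAbs (B * G)) ∘ fun q : Fin m × Fin p =>
      Matrix.single q.1 q.2 (M q.1 q.2)) =
      fun q : Fin m × Fin p => matAbs B * Matrix.single q.1 q.2 (M q.1 q.2) := by
    funext q
    exact matAbs_mul_stdBasis B q.1 q.2 _ (hM q.1 q.2)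
  rw [this, Finset.sum_map_toList]
  calc ∑ q : Fin m × Fin p, matAbs B * Matrix.single q.1 q.2 (M q.1 q.2)
      = matAbs B * ∑ q : Fin m × Fin p, Matrix.single q.1 q.2 (M q.1 q.2) := by
        rw [Matrix.mul_sum]
    _ = matAbs B * M := by
        rw [Fintype.sum_prod_type]; exact congrArg _ (Matrix.matrix_eq_sum_single M).symm

/-- Lemma 1: the interval hull of the `j`-fold iterate satisfies
`box(𝕋_{ℐ_A}^j(ℐ_Δ)) = [± Σ_{i=0}^{j} |Â^{j−i}| F_i]`. -/
theorem stmt3 {n p : ℕ} (Ahat ΔK : Matrix (Fin n) (Fin n) ℝ)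
    (ΔS : Matrix (Fin n) (Fin p) ℝ) (hΔK : ∀ i j, 0 ≤ ΔK i j) (hΔS : ∀ i j, 0 ≤ ΔS i j)
    (F : ℕ → Matrix (Fin n) (Fin p) ℝ) (hF0 : F 0 = ΔS)
    (hF : ∀ j, F (j + 1) = ΔK * ∑ i ∈ Finset.range (j + 1), matAbs (Ahat ^ (j - i)) * F i) :
    ∀ j : ℕ, ((Tstep Ahat ΔK)^[j] ⟨0, EList ΔS⟩).box =
      intervalMat 0 (∑ i ∈ Finset.range (j + 1), matAbs (Ahat ^ (j - i)) * F i) := by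
  -- nonnegativity of all F i
  have hFpos : ∀ i a b, 0 ≤ F i a b := by
    intro i
    induction i using Nat.strong_induction_on with
    | _ i ih =>
      match i with
      | 0 => intro a b; rw [hF0]; exact hΔS a b
      | (j+1) =>
        intro a b
        rw [hF j]
        rw [Matrix.mul_apply]
        apply Finset.sum_nonneg
        intro c _
        apply mul_nonneg (hΔK a c)
        rw [Matrix.sum_apply]
        apply Finset.sum_nonneg
        intro i hi
        rw [Matrix.mul_apply]
        apply Finset.sum_nonneg
        intro d _
        exact mul_nonneg (abs_nonneg _) (ih i (Finset.mem_range.mp hi) d b)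
  -- key invariant
  have key : ∀ j : ℕ, ((Tstep Ahat ΔK)^[j] ⟨0, EList ΔS⟩).c = 0 ∧
      ∀ m : ℕ, ((((Tstep Ahat ΔK)^[j] ⟨0, EList ΔS⟩).g.map
          (fun G => matAbs (Ahat ^ m * G))).sum) =
        ∑ i ∈ Finset.range (j + 1), matAbs (Ahat ^ (m + (j - i))) * F i := by
    intro j
    induction j with
    | zero =>
      constructor
      · rfl
      · intro m
        simp only [Function.iterate_zero, id_eq]
        rw [sum_EList_abs_mul _ _ hΔS]
        simp [hF0]
    | succ j ih =>
      obtain ⟨ihc, ihg⟩ := ih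
      rw [Function.iterate_succ_apply']
      set Z := (Tstep Ahat ΔK)^[j] (⟨0, EList ΔS⟩ : ZRep (Fin n) (Fin p))
      have hfun : (fun G : Matrix (Fin n) (Fin p) ℝ => matAbs (Ahat ^ 0 * G)) = matAbs := by
        funext G; rw [pow_zero, Matrix.one_mul]
      have hsum : ((Z.g.map matAbs).sum) = ∑ i ∈ Finset.range (j + 1),
          matAbs (Ahat ^ (j - i)) * F i := by
        have := ihg 0
        simp only [Nat.zero_add] at this
        rwa [hfun] at this
      have hgen : ΔK * (matAbs Z.c + (Z.g.map matAbs).sum) = F (j + 1) := by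
        rw [ihc, matAbs_zero, zero_add, hsum, hF]
      constructor
      · show Ahat * Z.c = 0
        rw [ihc, Matrix.mul_zero]
      · intro m
        show (((Z.g.map (fun G => Ahat * G) ++
            EList (ΔK * (matAbs Z.c + (Z.g.map matAbs).sum))).map
            (fun G => matAbs (Ahat ^ m * G))).sum) = _
        rw [hgen, List.map_append, List.sum_append, List.map_map,
          sum_EList_abs_mul _ _ (hFpos (j + 1))]
        have hcomp : ((fun G => matAbs (Ahat ^ m * G)) ∘ fun G : Matrix (Fin n) (Fin p) ℝ =>
            Ahat * G) = fun G => matAbs (Ahat ^ (m + 1) * G) := by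
          funext G
          simp only [Function.comp_apply]
          rw [pow_succ, Matrix.mul_assoc]
        rw [hcomp, ihg (m + 1)]
        conv_rhs => rw [Finset.sum_range_succ]
        congr 1
        · apply Finset.sum_congr rfl
          intro i hi
          have hi' := Finset.mem_range.mp hi
          have he : m + 1 + (j - i) = m + (j + 1 - i) := by omega
          rw [he]
        · have he : m + (j + 1 - (j + 1)) = m := by omega
          rw [he]
  intro j
  obtain ⟨hc, hg⟩ := key j
  unfold ZRep.box
  rw [hc]
  have hfun : (fun G : Matrix (Fin n) (Fin p) ℝ => matAbs (Ahat ^ 0 * G)) = matAbs := by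
    funext G; rw [pow_zero, Matrix.one_mul]
  have := hg 0
  simp only [Nat.zero_add] at this
  rw [hfun] at this
  rw [this]
end
end

section
/- Let Â ∈ ℝ^{n×n}, Δ_K ∈ ℝ^{n×n} with Δ_K ≥ 0, and Δ_S ∈ ℝ^{n×p} with Δ_S ≥ 0. Define F_0 = Δ_S and F_{j+1} = Δ_K Σ_{i=0}^{j} |Â^{j−i}| F_i for j ≥ 0, and define P_1 = I_n and P_{j+1} = |Â^j| + Σ_{h=1}^{j} P_h Δ_K |Â^{j−h}| for j ≥ 1. Then F_j = Δ_K P_j Δ_S for every j ≥ 1. -/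
open Matrix Finset Pointwise

noncomputable section

/-- reindex a single sum `h ↦ j+1-h` on `Icc 1 j` -/
lemma sumswap1 {α : Type*} [AddCommMonoid α] (j : ℕ) (g : ℕ → ℕ → α) :
    ∑ h ∈ Icc 1 j, g (h-1) (j-h) = ∑ h ∈ Icc 1 j, g (j-h) (h-1) := by
  refine Finset.sum_nbij' (fun h => j + 1 - h) (fun h => j + 1 - h) ?_ ?_ ?_ ?_ ?_ <;>
    · intro a ha
      simp only [mem_Icc] at *
      first
      | omega
      | (congr 1 <;> omega)

/-- reindex a double sum `(h,m) ↦ (j+m+1-h, m)` -/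
lemma sumswap2 {α : Type*} [AddCommMonoid α] (j : ℕ) (g : ℕ → ℕ → ℕ → α) :
    ∑ h ∈ Icc 2 j, ∑ m ∈ Icc 1 (h-1), g m (h-1-m) (j-h)
      = ∑ h ∈ Icc 2 j, ∑ m ∈ Icc 1 (h-1), g m (j-h) (h-1-m) := by
  rw [Finset.sum_sigma', Finset.sum_sigma']
  refine Finset.sum_nbij' (fun x => ⟨j + x.2 + 1 - x.1, x.2⟩)
    (fun x => ⟨j + x.2 + 1 - x.1, x.2⟩) ?_ ?_ ?_ ?_ ?_
  · rintro ⟨h, m⟩ ha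
    simp only [Finset.mem_sigma, mem_Icc] at ha ⊢
    omega
  · rintro ⟨h, m⟩ ha
    simp only [Finset.mem_sigma, mem_Icc] at ha ⊢
    omega
  · rintro ⟨h, m⟩ ha
    simp only [Finset.mem_sigma, mem_Icc] at ha
    simp only [Sigma.mk.inj_iff, heq_eq_eq, and_true]
    omega
  · rintro ⟨h, m⟩ ha
    simp only [Finset.mem_sigma, mem_Icc] at ha
    simp only [Sigma.mk.inj_iff, heq_eq_eq, and_true]
    omega
  · rintro ⟨h, m⟩ ha
    simp only [Finset.mem_sigma, mem_Icc] at ha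
    have e1 : h - 1 - m = j - (j + m + 1 - h) := by omega
    have e2 : j - h = j + m + 1 - h - 1 - m := by omega
    rw [e1, e2]

lemma matAbs_one {n : ℕ} : matAbs (1 : Matrix (Fin n) (Fin n) ℝ) = 1 := by
  ext i j
  simp only [matAbs, Matrix.one_apply]
  split <;> norm_num

set_option maxHeartbeats 1000000 in
/-- the mirrored recursion for `P` -/
lemma mirrorP {n : ℕ} (Ahat ΔK : Matrix (Fin n) (Fin n) ℝ)
    (P : ℕ → Matrix (Fin n) (Fin n) ℝ) (hP1 : P 1 = 1)
    (hP : ∀ j, 1 ≤ j →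
      P (j + 1) = matAbs (Ahat ^ j) + ∑ h ∈ Finset.Icc 1 j, P h * ΔK * matAbs (Ahat ^ (j - h))) :
    ∀ j, 1 ≤ j → P (j + 1)
      = matAbs (Ahat ^ j) + ∑ h ∈ Finset.Icc 1 j, matAbs (Ahat ^ (j - h)) * (ΔK * P h) := by
  intro j
  induction j using Nat.strong_induction_on with
  | _ j IH =>
  intro hj
  rw [hP j hj]
  congr 1
  have hA0 : matAbs (Ahat ^ 0) = 1 := by rw [pow_zero, matAbs_one]
  have hIcc : Icc 1 j = insert 1 (Icc 2 j) := by
    ext x; simp only [mem_Icc, mem_insert]; omega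
  have h1 : (1:ℕ) ∉ Icc 2 j := by simp
  rw [hIcc, Finset.sum_insert h1, Finset.sum_insert h1, hP1]
  have LHSsum : ∑ h ∈ Icc 2 j, P h * ΔK * matAbs (Ahat ^ (j-h))
      = ∑ h ∈ Icc 2 j, (matAbs (Ahat ^ (h-1)) * ΔK * matAbs (Ahat ^ (j-h))
          + ∑ m ∈ Icc 1 (h-1),
              matAbs (Ahat ^ (h-1-m)) * (ΔK * P m) * (ΔK * matAbs (Ahat ^ (j-h)))) := by
    refine Finset.sum_congr rfl fun h hh => ?_
    simp only [mem_Icc] at hh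
    have hPh : P h = matAbs (Ahat ^ (h-1))
        + ∑ m ∈ Icc 1 (h-1), matAbs (Ahat ^ (h-1-m)) * (ΔK * P m) := by
      have := IH (h-1) (by omega) (by omega)
      rwa [show h-1+1 = h by omega] at this
    rw [hPh, add_mul, add_mul, Finset.sum_mul, Finset.sum_mul]
    congr 1
    exact Finset.sum_congr rfl fun m _ => by rw [mul_assoc]
  have RHSsum : ∑ h ∈ Icc 2 j, matAbs (Ahat ^ (j-h)) * (ΔK * P h)
      = ∑ h ∈ Icc 2 j, (matAbs (Ahat ^ (j-h)) * (ΔK * matAbs (Ahat ^ (h-1)))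
          + ∑ m ∈ Icc 1 (h-1),
              matAbs (Ahat ^ (j-h)) * (ΔK * P m) * (ΔK * matAbs (Ahat ^ (h-1-m)))) := by
    refine Finset.sum_congr rfl fun h hh => ?_
    simp only [mem_Icc] at hh
    have hPh : P h = matAbs (Ahat ^ (h-1))
        + ∑ m ∈ Icc 1 (h-1), P m * ΔK * matAbs (Ahat ^ (h-1-m)) := by
      have := hP (h-1) (by omega)
      rwa [show h-1+1 = h by omega] at this
    rw [hPh, mul_add, mul_add, Finset.mul_sum, Finset.mul_sum]
    congr 1
    refine Finset.sum_congr rfl fun m _ => ?_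
    rw [← mul_assoc, ← mul_assoc, ← mul_assoc, ← mul_assoc, ← mul_assoc]
  rw [LHSsum, RHSsum, Finset.sum_add_distrib, Finset.sum_add_distrib]
  have hD : (∑ h ∈ Icc 2 j, ∑ m ∈ Icc 1 (h-1),
        matAbs (Ahat ^ (h-1-m)) * (ΔK * P m) * (ΔK * matAbs (Ahat ^ (j-h))))
      = ∑ h ∈ Icc 2 j, ∑ m ∈ Icc 1 (h-1),
        matAbs (Ahat ^ (j-h)) * (ΔK * P m) * (ΔK * matAbs (Ahat ^ (h-1-m))) :=
    sumswap2 j (fun m a b => matAbs (Ahat ^ a) * (ΔK * P m) * (ΔK * matAbs (Ahat ^ b)))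
  have hS : 1 * ΔK * matAbs (Ahat ^ (j-1))
        + ∑ h ∈ Icc 2 j, matAbs (Ahat ^ (h-1)) * ΔK * matAbs (Ahat ^ (j-h))
      = matAbs (Ahat ^ (j-1)) * (ΔK * 1)
        + ∑ h ∈ Icc 2 j, matAbs (Ahat ^ (j-h)) * (ΔK * matAbs (Ahat ^ (h-1))) := by
    have key := sumswap1 j (fun a b => matAbs (Ahat ^ a) * ΔK * matAbs (Ahat ^ b))
    beta_reduce at key
    rw [hIcc, Finset.sum_insert h1, Finset.sum_insert h1] at key
    rw [show (1:ℕ) - 1 = 0 from rfl, hA0] at key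
    rw [key]
    congr 1
    · rw [mul_assoc]
    · exact Finset.sum_congr rfl fun h _ => by rw [mul_assoc]
  rw [← add_assoc, ← add_assoc, hS, hD]

/-- Lemma 2: `F_j = Δ_K P_j Δ_S` for every `j ≥ 1`. -/
theorem stmt5 {n p : ℕ} (Ahat ΔK : Matrix (Fin n) (Fin n) ℝ)
    (ΔS : Matrix (Fin n) (Fin p) ℝ) (hΔK : ∀ i j, 0 ≤ ΔK i j) (hΔS : ∀ i j, 0 ≤ ΔS i j)
    (F : ℕ → Matrix (Fin n) (Fin p) ℝ) (hF0 : F 0 = ΔS)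
    (hF : ∀ j, F (j + 1) = ΔK * ∑ i ∈ Finset.range (j + 1), matAbs (Ahat ^ (j - i)) * F i)
    (P : ℕ → Matrix (Fin n) (Fin n) ℝ) (hP1 : P 1 = 1)
    (hP : ∀ j, 1 ≤ j →
      P (j + 1) = matAbs (Ahat ^ j) + ∑ h ∈ Finset.Icc 1 j, P h * ΔK * matAbs (Ahat ^ (j - h))) :
    ∀ j, 1 ≤ j → F j = ΔK * P j * ΔS := by
  intro j
  induction j using Nat.strong_induction_on with
  | _ j IH =>
  intro hj
  obtain ⟨k, rfl⟩ : ∃ k, j = k + 1 := ⟨j - 1, by omega⟩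
  rw [hF k]
  rcases Nat.eq_zero_or_pos k with hk | hk
  · subst hk
    simp [Finset.sum_range_one, hF0, hP1, pow_zero, matAbs_one, Matrix.mul_assoc]
  · rw [mirrorP Ahat ΔK P hP1 hP k hk, Finset.sum_range_succ', hF0]
    have hterm : ∀ i ∈ Finset.range k,
        matAbs (Ahat ^ (k - (i+1))) * F (i+1)
          = matAbs (Ahat ^ (k - (i+1))) * (ΔK * P (i+1) * ΔS) := by
      intro i hi
      simp only [Finset.mem_range] at hi
      rw [IH (i+1) (by omega) (by omega)]
    rw [Finset.sum_congr rfl hterm]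
    have hreidx : ∑ h ∈ Finset.Icc 1 k, matAbs (Ahat ^ (k - h)) * (ΔK * P h)
        = ∑ i ∈ Finset.range k, matAbs (Ahat ^ (k - (i+1))) * (ΔK * P (i+1)) := by
      refine Finset.sum_nbij' (fun h => h - 1) (fun i => i + 1) ?_ ?_ ?_ ?_ ?_
      · intro a ha; simp only [mem_Icc, Finset.mem_range] at *; omega
      · intro a ha; simp only [mem_Icc, Finset.mem_range] at *; omega
      · intro a ha; simp only [mem_Icc] at ha; omega
      · intro a _; omega
      · intro a ha
        simp only [mem_Icc] at ha
        rw [show a - 1 + 1 = a by omega]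
    rw [hreidx, Nat.sub_zero]
    conv_rhs => rw [Matrix.mul_assoc, Matrix.add_mul, Matrix.sum_mul]
    rw [add_comm (matAbs (Ahat ^ k) * ΔS)]
    congr 1
    congr 1
    exact Finset.sum_congr rfl fun x _ => (Matrix.mul_assoc _ _ _).symm
end
end

section
/- Let Â ∈ ℝ^{n×n}, B̂ ∈ ℝ^{n×m}, K ∈ ℝ^{m×n}, Δ_S = [Δ_A Δ_B] ∈ ℝ^{n×(n+m)} with Δ_S ≥ 0 (Δ_A its first n columns, Δ_B its last m columns), and w̄ ∈ ℝ^n with w̄ ≥ 0. Set Â_K = Â + B̂K, Δ_K = Δ_A + Δ_B|K|, ℐ_Δ = [±Δ_S], 𝒲 = [±w̄] ⊆ ℝ^n, and 𝒜_K = { Â_K + D[Iₙ; K] : |D| ≤ Δ_S } (with [Iₙ; K] the (n+m)×n vertical stacking). Given sequences z(i) ∈ ℝ^n and v(i) ∈ ℝ^m, define the sets 𝒮(0) = {0} and 𝒮(j+1) = 𝒜_K 𝒮(j) ⊕ ℐ_Δ[z(j); v(j)] ⊕ 𝒲. Define ℐ^Δ(j) = box(𝕋_{ℐ_{A_K}}^j(⟨0;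 E(Δ_S)⟩)) and ℐ^𝒲(j) = box(𝕋_{ℐ_{A_K}}^j(⟨0; E(w̄)⟩)), where ℐ_{A_K} = Â_K ⊕ [±Δ_K], and let ℬ(j) = Σ_{i=0}^{j−1} ℐ^Δ(j−i−1)[z(i); v(i)] ⊕ Σ_{i=0}^{j−1} ℐ^𝒲(i). Then 𝒮(j) ⊆ ℬ(j) for all j ≥ 0. -/
open Matrix Finset Pointwise

noncomputable section

/-- a vector of `ℝ^n` viewed as a column matrix -/
def colVec {n : ℕ} (w : Fin n → ℝ) : Matrix (Fin n) (Fin 1) ℝ := fun i _ => w i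

/-- the set `𝒜_K = {Â_K + D[Iₙ; K] : |D| ≤ Δ_S}` -/
def AKset {n m : ℕ} (AhK : Matrix (Fin n) (Fin n) ℝ) (K : Matrix (Fin m) (Fin n) ℝ)
    (ΔS : Matrix (Fin n) (Fin n ⊕ Fin m) ℝ) : Set (Matrix (Fin n) (Fin n) ℝ) :=
  {X | ∃ D ∈ intervalMat 0 ΔS, X = AhK + D * Matrix.fromRows 1 K}


def gspan {ι κ : Type*} : List (Matrix ι κ ℝ) → Set (Matrix ι κ ℝ)
  | [] => {0}
  | G :: gs => {X | ∃ β : ℝ, |β| ≤ 1 ∧ ∃ Y ∈ gspan gs, X = β • G + Y}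

lemma gspan_iff {ι κ : Type*} (l : List (Matrix ι κ ℝ)) (X : Matrix ι κ ℝ) :
    X ∈ gspan l ↔ ∃ β : Fin l.length → ℝ, (∀ i, |β i| ≤ 1) ∧ X = ∑ i, β i • l.get i := by
  induction l generalizing X with
  | nil =>
    simp only [gspan, Set.mem_singleton_iff, List.length_nil]
    constructor
    · rintro rfl; exact ⟨fun i => 0, fun i => by simp, by simp⟩
    · rintro ⟨β, -, rfl⟩; simp
  | cons G gs ih =>
    constructor
    · rintro ⟨b, hb, Y, hY, rfl⟩
      obtain ⟨γ, hγ, rfl⟩ := (ih Y).1 hY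
      refine ⟨Fin.cons b γ, fun i => ?_, ?_⟩
      · refine Fin.cases ?_ ?_ i <;> simp [hb, hγ]
      · erw [Fin.sum_univ_succ]; simp
    · rintro ⟨β, hβ, rfl⟩
      refine ⟨β ⟨0, Nat.succ_pos _⟩, hβ _, ∑ i, β i.succ • gs.get i,
        (ih _).2 ⟨fun i => β i.succ, fun i => hβ _, rfl⟩, ?_⟩
      erw [Fin.sum_univ_succ]; simp [Fin.succ]

lemma mem_set_iff_gspan {ι κ : Type*} (Z : ZRep ι κ) (X : Matrix ι κ ℝ) :
    X ∈ Z.set ↔ ∃ Y ∈ gspan Z.g, X = Z.c + Y := by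
  constructor
  · rintro ⟨β, hβ, rfl⟩
    exact ⟨_, (gspan_iff _ _).2 ⟨β, hβ, rfl⟩, rfl⟩
  · rintro ⟨Y, hY, rfl⟩
    obtain ⟨β, hβ, rfl⟩ := (gspan_iff _ _).1 hY
    exact ⟨β, hβ, rfl⟩

lemma gspan_append {ι κ : Type*} {l1 l2 : List (Matrix ι κ ℝ)} {X Y : Matrix ι κ ℝ}
    (hX : X ∈ gspan l1) (hY : Y ∈ gspan l2) : X + Y ∈ gspan (l1 ++ l2) := by
  induction l1 generalizing X with
  | nil => simp only [gspan, Set.mem_singleton_iff] at hX; simpa [hX]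
  | cons G gs ih =>
    obtain ⟨b, hb, X', hX', rfl⟩ := hX
    exact ⟨b, hb, X' + Y, ih hX', by rw [add_assoc]⟩

lemma gspan_mul_left {ι κ μ : Type*} [Fintype ι] {l : List (Matrix ι κ ℝ)}
    {X : Matrix ι κ ℝ} (A : Matrix μ ι ℝ) (hX : X ∈ gspan l) :
    A * X ∈ gspan (l.map (fun G => A * G)) := by
  induction l generalizing X with
  | nil => simp only [gspan, Set.mem_singleton_iff] at hX ⊢; simp [hX, gspan]
  | cons G gs ih =>
    obtain ⟨b, hb, Y, hY, rfl⟩ := hX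
    exact ⟨b, hb, A * Y, ih hY, by show A * (b • G + Y) = b • (A * G) + A * Y; rw [Matrix.mul_add, Matrix.mul_smul]⟩

lemma abs_le_of_gspan {ι κ : Type*} {l : List (Matrix ι κ ℝ)} {X : Matrix ι κ ℝ}
    (hX : X ∈ gspan l) (i : ι) (j : κ) : |X i j| ≤ (l.map matAbs).sum i j := by
  induction l generalizing X with
  | nil => simp only [gspan, Set.mem_singleton_iff] at hX; simp [hX]
  | cons G gs ih =>
    obtain ⟨b, hb, Y, hY, rfl⟩ := hX
    have : |(b • G + Y) i j| ≤ |b| * |G i j| + |Y i j| := by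
      calc |(b • G + Y) i j| ≤ |(b • G) i j| + |Y i j| := abs_add_le _ _
      _ = |b| * |G i j| + |Y i j| := by simp [Matrix.smul_apply, abs_mul]
    refine this.trans ?_
    simp only [List.map_cons, List.sum_cons, Matrix.add_apply]
    have h1 : |b| * |G i j| ≤ matAbs G i j := by
      have h2 : |b| * |G i j| ≤ 1 * |G i j| := mul_le_mul_of_nonneg_right hb (abs_nonneg _)
      simpa [matAbs] using h2
    exact add_le_add h1 (ih hY)

lemma gspan_smul_sum {ι κ μ₀ : Type*} (lp : List μ₀) (f : μ₀ → Matrix ι κ ℝ)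
    (c : μ₀ → ℝ) (hc : ∀ p, |c p| ≤ 1) :
    (lp.map (fun p => c p • f p)).sum ∈ gspan (lp.map f) := by
  induction lp with
  | nil => simp [gspan]
  | cons p ps ih => exact ⟨c p, hc p, _, ih, by simp⟩

lemma mem_gspan_EList {ι κ : Type*} [Fintype ι] [Fintype κ] [DecidableEq ι] [DecidableEq κ]
    {F D : Matrix ι κ ℝ} (h : ∀ i j, |D i j| ≤ F i j) : D ∈ gspan (EList F) := by
  set c : ι × κ → ℝ := fun p => if F p.1 p.2 = 0 then 0 else D p.1 p.2 / F p.1 p.2 with hc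
  have hc1 : ∀ p, |c p| ≤ 1 := by
    intro p
    by_cases hF : F p.1 p.2 = 0
    · simp [hc, hF]
    · have hFpos : 0 < F p.1 p.2 := lt_of_le_of_ne ((abs_nonneg _).trans (h p.1 p.2)) (Ne.symm hF)
      simp only [hc, hF, if_false, abs_div, abs_of_pos hFpos]
      rw [div_le_one hFpos]
      exact h p.1 p.2
  have key : D = ((Finset.univ : Finset (ι × κ)).toList.map
      (fun p => c p • Matrix.single p.1 p.2 (F p.1 p.2))).sum := by
    have : ∀ p : ι × κ, c p • Matrix.single p.1 p.2 (F p.1 p.2)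
        = Matrix.single p.1 p.2 (D p.1 p.2) := by
      intro p
      rw [Matrix.smul_single]
      congr 1
      by_cases hF : F p.1 p.2 = 0
      · have : D p.1 p.2 = 0 := by
          have := h p.1 p.2; rw [hF] at this
          exact abs_eq_zero.1 (le_antisymm this (abs_nonneg _))
        simp [hc, hF, this]
      · simp [hc, hF, smul_eq_mul, div_mul_cancel₀ _ hF]
    simp_rw [this]
    rw [Finset.sum_map_toList]
    calc D = ∑ i, ∑ j, Matrix.single i j (D i j) := Matrix.matrix_eq_sum_single D
    _ = ∑ p : ι × κ, Matrix.single p.1 p.2 (D p.1 p.2) := by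
        rw [Fintype.sum_prod_type]
  rw [key]
  exact gspan_smul_sum _ _ c hc1

lemma Tstep_mem_s6 {ι κ μ : Type*} [Fintype ι] [Fintype κ] [Fintype μ] [DecidableEq ι] [DecidableEq μ]
    {C Δ : Matrix ι κ ℝ} {Z : ZRep κ μ} {A : Matrix ι κ ℝ} {X : Matrix κ μ ℝ}
    (hA : A ∈ intervalMat C Δ) (hX : X ∈ Z.set) :
    A * X ∈ (Tstep C Δ Z).set := by
  obtain ⟨Y, hY, rfl⟩ := (mem_set_iff_gspan _ _).1 hX
  set D : Matrix ι κ ℝ := A - C with hD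
  have hDle : ∀ i j, |D i j| ≤ Δ i j := fun i j => hA i j
  have hXbound : ∀ r q, |(Z.c + Y) r q| ≤ (matAbs Z.c + (Z.g.map matAbs).sum) r q := by
    intro r q
    calc |(Z.c + Y) r q| ≤ |Z.c r q| + |Y r q| := by rw [Matrix.add_apply]; exact abs_add_le _ _
    _ ≤ (matAbs Z.c + (Z.g.map matAbs).sum) r q := by
        rw [Matrix.add_apply]; exact add_le_add le_rfl (abs_le_of_gspan hY r q)
  have hDX : D * (Z.c + Y) ∈ gspan (EList (Δ * (matAbs Z.c + (Z.g.map matAbs).sum))) := by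
    apply mem_gspan_EList
    intro p q
    rw [Matrix.mul_apply, Matrix.mul_apply]
    calc |∑ r, D p r * (Z.c + Y) r q| ≤ ∑ r, |D p r * (Z.c + Y) r q| :=
          Finset.abs_sum_le_sum_abs _ _
    _ ≤ ∑ r, Δ p r * (matAbs Z.c + (Z.g.map matAbs).sum) r q := by
        apply Finset.sum_le_sum
        intro r _
        rw [abs_mul]
        exact mul_le_mul (hDle p r) (hXbound r q) (abs_nonneg _)
          ((abs_nonneg _).trans (hDle p r))
  have hCY : C * Y ∈ gspan (Z.g.map (fun G => C * G)) := gspan_mul_left C hY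
  have hsum := gspan_append hCY hDX
  rw [mem_set_iff_gspan]
  refine ⟨C * Y + D * (Z.c + Y), hsum, ?_⟩
  show A * (Z.c + Y) = C * Z.c + (C * Y + D * (Z.c + Y))
  rw [hD, Matrix.sub_mul, Matrix.mul_add C Z.c Y]
  abel

lemma set_subset_box {ι κ : Type*} (Z : ZRep ι κ) : Z.set ⊆ Z.box := by
  intro X hX
  obtain ⟨Y, hY, rfl⟩ := (mem_set_iff_gspan _ _).1 hX
  intro i j
  simpa using abs_le_of_gspan hY i j

lemma mem_finset_sum_sets {α : Type*} [AddCommMonoid α] {s : Finset ℕ} {F : ℕ → Set α}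
    {f : ℕ → α} (h : ∀ i ∈ s, f i ∈ F i) : (∑ i ∈ s, f i) ∈ ∑ i ∈ s, F i := by
  classical
  induction s using Finset.induction with
  | empty => simp
  | insert a s' hx ih =>
    rw [Finset.sum_insert hx, Finset.sum_insert hx]
    exact Set.add_mem_add (h a (Finset.mem_insert_self _ _))
      (ih fun i hi => h i (Finset.mem_insert_of_mem hi))

/-- Proposition 3: `𝒮(j) ⊆ ℬ(j)` for all `j ≥ 0`, where
`ℬ(j) = Σ_{i<j} ℐ^Δ(j−i−1)[z(i); v(i)] ⊕ Σ_{i<j} ℐ^𝒲(i)`,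
`ℐ^Δ(j) = box(𝕋_{ℐ_{A_K}}^j(⟨0;E(Δ_S)⟩))` and `ℐ^𝒲(j) = box(𝕋_{ℐ_{A_K}}^j(⟨0;E(w̄)⟩))`. -/
theorem stmt6 {n m : ℕ}
    (Ah : Matrix (Fin n) (Fin n) ℝ) (Bh : Matrix (Fin n) (Fin m) ℝ)
    (K : Matrix (Fin m) (Fin n) ℝ)
    (ΔS : Matrix (Fin n) (Fin n ⊕ Fin m) ℝ) (hΔS : ∀ i j, 0 ≤ ΔS i j)
    (wbar : Fin n → ℝ) (hw : ∀ i, 0 ≤ wbar i)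
    (z : ℕ → Matrix (Fin n) (Fin 1) ℝ) (v : ℕ → Matrix (Fin m) (Fin 1) ℝ)
    (S : ℕ → Set (Matrix (Fin n) (Fin 1) ℝ)) (hS0 : S 0 = {0})
    (hS : ∀ j, S (j + 1) =
      {x | ∃ Am ∈ AKset (Ah + Bh * K) K ΔS, ∃ s ∈ S j, ∃ D ∈ intervalMat 0 ΔS,
        ∃ w ∈ intervalMat 0 (colVec wbar),
          x = Am * s + D * Matrix.fromRows (z j) (v j) + w}) :
    ∀ j, S j ⊆
      (∑ i ∈ Finset.range j,
        (fun D => D * Matrix.fromRows (z i) (v i)) ''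
          ((Tstep (Ah + Bh * K)
              (ΔS.submatrix id Sum.inl + ΔS.submatrix id Sum.inr * matAbs K))^[j - i - 1]
            ⟨0, EList ΔS⟩).box) +
      ∑ i ∈ Finset.range j,
        ((Tstep (Ah + Bh * K)
            (ΔS.submatrix id Sum.inl + ΔS.submatrix id Sum.inr * matAbs K))^[i]
          ⟨0, EList (colVec wbar)⟩).box := by
  set C := Ah + Bh * K with hC
  set Δ := ΔS.submatrix id Sum.inl + ΔS.submatrix id Sum.inr * matAbs K with hΔ
  set ZΔ : ZRep (Fin n) (Fin n ⊕ Fin m) := ⟨0, EList ΔS⟩ with hZΔ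
  set ZW : ZRep (Fin n) (Fin 1) := ⟨0, EList (colVec wbar)⟩ with hZW
  -- membership of AKset in interval matrix
  have hAK : ∀ A ∈ AKset C K ΔS, A ∈ intervalMat C Δ := by
    rintro A ⟨D, hD, rfl⟩
    intro p q
    rw [Matrix.add_apply, add_sub_cancel_left]
    change |∑ r, D p r * Matrix.fromRows (1 : Matrix (Fin n) (Fin n) ℝ) K r q| ≤ Δ p q
    rw [Fintype.sum_sum_type]
    have h1 : ∀ r : Fin n, D p (Sum.inl r) * Matrix.fromRows (1 : Matrix (Fin n) (Fin n) ℝ) K (Sum.inl r) q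
        = D p (Sum.inl r) * (1 : Matrix (Fin n) (Fin n) ℝ) r q := by
      intro r; rw [Matrix.fromRows_apply_inl]
    have h2 : ∀ s : Fin m, D p (Sum.inr s) * Matrix.fromRows (1 : Matrix (Fin n) (Fin n) ℝ) K (Sum.inr s) q
        = D p (Sum.inr s) * K s q := by
      intro s; rw [Matrix.fromRows_apply_inr]
    simp_rw [h1, h2]
    have hDle : ∀ r, |D p r| ≤ ΔS p r := by
      intro r; have := hD p r; simpa using this
    have e1 : ∑ r : Fin n, D p (Sum.inl r) * (1 : Matrix (Fin n) (Fin n) ℝ) r q = D p (Sum.inl q) := by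
      rw [Finset.sum_eq_single q]
      · simp [Matrix.one_apply]
      · intro b _ hb; simp [Matrix.one_apply, hb]
      · intro h; exact absurd (Finset.mem_univ q) h
    rw [e1]
    calc |D p (Sum.inl q) + ∑ s, D p (Sum.inr s) * K s q|
        ≤ |D p (Sum.inl q)| + |∑ s, D p (Sum.inr s) * K s q| := abs_add_le _ _
      _ ≤ ΔS p (Sum.inl q) + ∑ s, ΔS p (Sum.inr s) * |K s q| := by
          apply add_le_add (hDle _)
          refine (Finset.abs_sum_le_sum_abs _ _).trans ?_
          apply Finset.sum_le_sum
          intro s _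
          rw [abs_mul]
          exact mul_le_mul_of_nonneg_right (hDle _) (abs_nonneg _)
      _ = Δ p q := by
          simp [hΔ, Matrix.add_apply, Matrix.mul_apply, Matrix.submatrix_apply, matAbs]
  -- the key invariant
  have key : ∀ j, ∀ x ∈ S j,
      ∃ (M : ℕ → Matrix (Fin n) (Fin n ⊕ Fin m) ℝ) (W : ℕ → Matrix (Fin n) (Fin 1) ℝ),
        (∀ i < j, M i ∈ ((Tstep C Δ)^[j - i - 1] ZΔ).set) ∧
        (∀ i < j, W i ∈ ((Tstep C Δ)^[i] ZW).set) ∧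
        x = (∑ i ∈ Finset.range j, M i * Matrix.fromRows (z i) (v i)) +
            ∑ i ∈ Finset.range j, W i := by
    intro j
    induction j with
    | zero =>
      intro x hx
      rw [hS0] at hx
      refine ⟨fun _ => 0, fun _ => 0, by omega, by omega, ?_⟩
      simp [hx]
      exact hx
    | succ j ih =>
      intro x hx
      rw [hS j] at hx
      obtain ⟨Am, hAm, s, hs, D, hD, w, hw', rfl⟩ := hx
      obtain ⟨M, W, hM, hW, rfl⟩ := ih s hs
      have hAmI : Am ∈ intervalMat C Δ := hAK Am hAm
      refine ⟨fun i => if i = j then D else Am * M i,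
              fun i => if i = 0 then w else Am * W (i - 1), ?_, ?_, ?_⟩
      · intro i hi
        show (if i = j then D else Am * M i) ∈ ((Tstep C Δ)^[j + 1 - i - 1] ZΔ).set
        by_cases hij : i = j
        · rw [if_pos hij, hij]
          have harith : j + 1 - j - 1 = 0 := by omega
          rw [harith, Function.iterate_zero_apply, mem_set_iff_gspan]
          refine ⟨D, ?_, (zero_add D).symm⟩
          apply mem_gspan_EList
          intro p' q'
          simpa using hD p' q'
        · have hij' : i < j := by omega
          simp only [if_neg hij]
          have harith : j + 1 - i - 1 = (j - i - 1) + 1 := by omega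
          rw [harith, Function.iterate_succ_apply']
          exact Tstep_mem_s6 hAmI (hM i hij')
      · intro i hi
        show (if i = 0 then w else Am * W (i - 1)) ∈ ((Tstep C Δ)^[i] ZW).set
        by_cases hi0 : i = 0
        · subst hi0
          simp only [if_pos rfl]
          -- w ∈ ZW.set
          rw [Function.iterate_zero_apply]
          rw [mem_set_iff_gspan]
          refine ⟨w, ?_, by simp [hZW]⟩
          apply mem_gspan_EList
          intro p q
          have := hw' p q
          simpa using this
        · obtain ⟨i', rfl⟩ : ∃ i', i = i' + 1 := ⟨i - 1, by omega⟩
          simp only [if_neg hi0]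
          have : i' + 1 - 1 = i' := by omega
          rw [this, Function.iterate_succ_apply']
          exact Tstep_mem_s6 hAmI (hW i' (by omega))
      · rw [Finset.sum_range_succ, Finset.sum_range_succ']
        simp only [if_pos rfl]
        have e1 : ∀ i ∈ Finset.range j,
            (if i = j then D else Am * M i) * Matrix.fromRows (z i) (v i)
            = Am * (M i * Matrix.fromRows (z i) (v i)) := by
          intro i hi
          rw [if_neg (Finset.mem_range.1 hi).ne, Matrix.mul_assoc]
        have e2 : ∀ i ∈ Finset.range j,
            (if i + 1 = 0 then w else Am * W (i + 1 - 1)) = Am * W i := by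
          intro i _
          rw [if_neg (Nat.succ_ne_zero i), Nat.add_sub_cancel]
        rw [Finset.sum_congr rfl e1, Finset.sum_congr rfl e2,
          Matrix.mul_add, Matrix.mul_sum, Matrix.mul_sum]
        abel
  -- conclude
  intro j x hx
  obtain ⟨M, W, hM, hW, rfl⟩ := key j x hx
  apply Set.add_mem_add
  · apply mem_finset_sum_sets
    intro i hi
    exact Set.mem_image_of_mem _ (set_subset_box _ (hM i (Finset.mem_range.1 hi)))
  · apply mem_finset_sum_sets
    intro i hi
    exact set_subset_box _ (hW i (Finset.mem_range.1 hi))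
end
end

section
/- Error-tube invariance: let Â ∈ ℝ^{n×n}, B̂ ∈ ℝ^{n×m}, K ∈ ℝ^{m×n}, Δ_S ∈ ℝ^{n×(n+m)} with Δ_S ≥ 0, w̄ ∈ ℝ^n with w̄ ≥ 0, and let A ∈ ℝ^{n×n}, B ∈ ℝ^{n×m} satisfy |[A B] − [Â B̂]| ≤ Δ_S entrywise. Set A_K = A + BK, A_Δ = A − Â, B_Δ = B − B̂, Â_K = Â + B̂K, ℐ_Δ = [±Δ_S], 𝒲 = [±w̄], and 𝒜_K = { Â_K + D[Iₙ; K] : |D| ≤ Δ_S }. Given sequences z(k) ∈ ℝ^n, v(k) ∈ ℝ^m, w(k) ∈ 𝒲, a sequence e(k) ∈ ℝ^n with e(k+1) = A_K e(k) + A_Δ z(k) + B_Δ v(k) + w(k), and sets 𝒮(k) ⊆ ℝ^n with 𝒮(k+1) = 𝒜_K 𝒮(k) ⊕ ℐ_Δ[z(k); v(k)] ⊕ 𝒲: if e(0) ∈ 𝒮(0), then e(k) ∈ 𝒮(k) for all k ≥ 0. -/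
open Matrix Finset Pointwise

noncomputable section

/-- error-tube invariance: if `e(0) ∈ 𝒮(0)` then `e(k) ∈ 𝒮(k)` for all `k`. -/
theorem stmt12 {n m : ℕ}
    (Ah : Matrix (Fin n) (Fin n) ℝ) (Bh : Matrix (Fin n) (Fin m) ℝ)
    (K : Matrix (Fin m) (Fin n) ℝ)
    (ΔS : Matrix (Fin n) (Fin n ⊕ Fin m) ℝ) (hΔS : ∀ i j, 0 ≤ ΔS i j)
    (wbar : Fin n → ℝ) (hwbar : ∀ i, 0 ≤ wbar i)
    (A : Matrix (Fin n) (Fin n) ℝ) (B : Matrix (Fin n) (Fin m) ℝ)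
    (hAB : ∀ i j, |Matrix.fromCols A B i j - Matrix.fromCols Ah Bh i j| ≤ ΔS i j)
    (z : ℕ → Matrix (Fin n) (Fin 1) ℝ) (v : ℕ → Matrix (Fin m) (Fin 1) ℝ)
    (w : ℕ → Matrix (Fin n) (Fin 1) ℝ) (hw : ∀ k, w k ∈ intervalMat 0 (colVec wbar))
    (e : ℕ → Matrix (Fin n) (Fin 1) ℝ)
    (he : ∀ k, e (k + 1) =
      (A + B * K) * e k + (A - Ah) * z k + (B - Bh) * v k + w k)
    (S : ℕ → Set (Matrix (Fin n) (Fin 1) ℝ))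
    (hS : ∀ k, S (k + 1) =
      {x | ∃ Am ∈ AKset (Ah + Bh * K) K ΔS, ∃ s ∈ S k, ∃ D ∈ intervalMat 0 ΔS,
        ∃ w' ∈ intervalMat 0 (colVec wbar),
          x = Am * s + D * Matrix.fromRows (z k) (v k) + w'})
    (he0 : e 0 ∈ S 0) :
    ∀ k, e k ∈ S k := by
  set D0 : Matrix (Fin n) (Fin n ⊕ Fin m) ℝ :=
    Matrix.fromCols A B - Matrix.fromCols Ah Bh with hD0
  have hD0mem : D0 ∈ intervalMat 0 ΔS := by
    intro i j
    simpa [hD0] using hAB i j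
  have hD0eq : D0 = Matrix.fromCols (A - Ah) (B - Bh) := by
    ext i j
    cases j <;> simp [hD0, Matrix.fromCols]
  intro k
  induction k with
  | zero => exact he0
  | succ k ih =>
    rw [hS k]
    refine ⟨A + B * K, ⟨D0, hD0mem, ?_⟩, e k, ih, D0, hD0mem, w k, hw k, ?_⟩
    · rw [hD0eq]; erw [Matrix.fromCols_mul_fromRows]
      simp only [Matrix.sub_mul, Matrix.mul_one]
      abel
    · rw [hD0eq, Matrix.fromCols_mul_fromRows, he k]
      abel
end
end

section
/- Robust polytopic constraint reformulation: let z ∈ ℝ^n, H ∈ ℝ^{r×n}, b ∈ ℝ^r, and for i = 0,…,j−1 let Δ_i ∈ ℝ^{n×p} with Δ_i ≥ 0 entrywise and ξ_i ∈ ℝ^p. Then the set inclusion {z} ⊕ Σ_{i=0}^{j−1} [±Δ_i]ξ_i ⊆ {x ∈ ℝ^n : Hx ≤ b} holds if and only if Hz + |H| Σ_{i=0}^{j−1} Δ_i |ξ_i| ≤ b, where [±Δ]ξ = {Dξ : |D| ≤ Δ} and ⊕ and Σ denote Minkowski sums. -/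
open Matrix Finset Pointwise

noncomputable section

lemma mul_sign_self (x : ℝ) : x * Real.sign x = |x| := by
  rcases lt_trichotomy x 0 with h | h | h
  · rw [Real.sign_of_neg h, abs_of_neg h]; ring
  · simp [h]
  · rw [Real.sign_of_pos h, abs_of_pos h]; ring

lemma abs_sign_le (x : ℝ) : |Real.sign x| ≤ 1 := by
  rcases lt_trichotomy x 0 with h | h | h
  · simp [Real.sign_of_neg h]
  · simp [h]
  · simp [Real.sign_of_pos h]

lemma mem_setSum {α : Type*} [AddCommMonoid α] {s : Finset ℕ} {S : ℕ → Set α} {x : α} :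
    x ∈ ∑ i ∈ s, S i ↔ ∃ f : ℕ → α, (∀ i ∈ s, f i ∈ S i) ∧ x = ∑ i ∈ s, f i := by
  classical
  induction s using Finset.induction_on generalizing x with
  | empty => simp [Set.mem_zero]
  | @insert a s hnot ih =>
    rw [Finset.sum_insert hnot, Set.mem_add]
    constructor
    · rintro ⟨u, hu, v, hv, rfl⟩
      obtain ⟨f, hf, rfl⟩ := ih.mp hv
      refine ⟨Function.update f a u, ?_, ?_⟩
      · intro i hi
        rcases Finset.mem_insert.mp hi with rfl | hi
        · simp [hu]
        · rw [Function.update_of_ne (ne_of_mem_of_not_mem hi hnot)]; exact hf i hi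
      · rw [Finset.sum_insert hnot, Function.update_self]
        congr 1
        exact (Finset.sum_congr rfl fun i hi =>
          (Function.update_of_ne (ne_of_mem_of_not_mem hi hnot) _ _).symm)
    · rintro ⟨f, hf, rfl⟩
      rw [Finset.sum_insert hnot]
      exact ⟨f a, hf a (Finset.mem_insert_self a s), _,
        ih.mpr ⟨f, fun i hi => hf i (Finset.mem_insert_of_mem hi), rfl⟩, rfl⟩

/-- robust polytopic constraint reformulation:
`{z} ⊕ Σ_{i<j} [±Δ_i]ξ_i ⊆ {x : Hx ≤ b}` iff `Hz + |H| Σ_{i<j} Δ_i |ξ_i| ≤ b`. -/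
theorem stmt14 {n p r : ℕ} (z : Matrix (Fin n) (Fin 1) ℝ) (H : Matrix (Fin r) (Fin n) ℝ)
    (b : Matrix (Fin r) (Fin 1) ℝ) (j : ℕ) (Δ : ℕ → Matrix (Fin n) (Fin p) ℝ)
    (hΔ : ∀ i, i < j → ∀ a c, 0 ≤ Δ i a c) (ξ : ℕ → Matrix (Fin p) (Fin 1) ℝ) :
    ({z} + ∑ i ∈ Finset.range j, (fun D => D * ξ i) '' intervalMat 0 (Δ i)) ⊆
        {x : Matrix (Fin n) (Fin 1) ℝ | ∀ a c, (H * x) a c ≤ b a c} ↔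
      ∀ a c, (H * z + matAbs H * ∑ i ∈ Finset.range j, Δ i * matAbs (ξ i)) a c ≤ b a c := by
  have key : ∀ a c, (matAbs H * ∑ i ∈ Finset.range j, Δ i * matAbs (ξ i)) a c
      = ∑ i ∈ Finset.range j, ∑ k, ∑ l, |H a k| * (Δ i k l * |ξ i l c|) := by
    intro a c
    rw [Matrix.mul_sum, Matrix.sum_apply]
    refine Finset.sum_congr rfl fun i _ => ?_
    rw [Matrix.mul_apply]
    refine Finset.sum_congr rfl fun k _ => ?_
    rw [Matrix.mul_apply, Finset.mul_sum]
    rfl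
  have expand : ∀ (f : ℕ → Matrix (Fin n) (Fin 1) ℝ) (a : Fin r) (c : Fin 1),
      (H * (z + ∑ i ∈ Finset.range j, f i)) a c
        = (H * z) a c + ∑ i ∈ Finset.range j, ∑ k, H a k * f i k c := by
    intro f a c
    rw [Matrix.mul_add, Matrix.add_apply, Matrix.mul_sum, Matrix.sum_apply]
    congr 1
  constructor
  · intro h a c
    set D : ℕ → Matrix (Fin n) (Fin p) ℝ :=
      fun i k l => Real.sign (H a k) * Δ i k l * Real.sign (ξ i l c) with hD
    have hmem : (z + ∑ i ∈ Finset.range j, D i * ξ i) ∈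
        ({z} + ∑ i ∈ Finset.range j, (fun D => D * ξ i) '' intervalMat 0 (Δ i)) := by
      refine Set.mem_add.mpr ⟨z, rfl, _, ?_, rfl⟩
      refine mem_setSum.mpr ⟨fun i => D i * ξ i, fun i hi => ⟨D i, ?_, rfl⟩, rfl⟩
      intro k l
      simp only [Matrix.zero_apply]
      have hΔ' := hΔ i (Finset.mem_range.mp hi) k l
      have : |D i k l - 0| = |Real.sign (H a k)| * Δ i k l * |Real.sign (ξ i l c)| := by
        rw [sub_zero, hD]
        simp only [abs_mul, abs_of_nonneg hΔ']
      rw [this]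
      calc |Real.sign (H a k)| * Δ i k l * |Real.sign (ξ i l c)|
          ≤ 1 * Δ i k l * 1 := by
            gcongr
            exacts [abs_sign_le _, abs_sign_le _]
        _ = Δ i k l := by ring
    have hle := h hmem a c
    rw [expand] at hle
    have heq : ∀ i ∈ Finset.range j, (∑ k, H a k * (D i * ξ i) k c)
        = ∑ k, ∑ l, |H a k| * (Δ i k l * |ξ i l c|) := by
      intro i _
      refine Finset.sum_congr rfl fun k _ => ?_
      rw [Matrix.mul_apply, Finset.mul_sum]
      refine Finset.sum_congr rfl fun l _ => ?_
      have : H a k * (D i k l * ξ i l c)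
          = (H a k * Real.sign (H a k)) * (Δ i k l * (ξ i l c * Real.sign (ξ i l c))) := by
        rw [hD]; ring
      rw [this, mul_sign_self, mul_sign_self]
    rw [Finset.sum_congr rfl heq] at hle
    rw [Matrix.add_apply, key]
    exact hle
  · intro h x hx
    obtain ⟨z', hz', s, hs, rfl⟩ := Set.mem_add.mp hx
    rcases hz' with rfl
    obtain ⟨f, hf, rfl⟩ := mem_setSum.mp hs
    intro a c
    rw [expand]
    have hb := h a c
    rw [Matrix.add_apply, key] at hb
    refine le_trans (add_le_add_right (Finset.sum_le_sum fun i hi => ?_) _) hb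
    obtain ⟨Di, hDi, hfi⟩ := hf i hi
    have hfi' : Di * ξ i = f i := hfi
    rw [← hfi']
    refine Finset.sum_le_sum fun k _ => ?_
    rw [Matrix.mul_apply, Finset.mul_sum]
    refine Finset.sum_le_sum fun l _ => ?_
    calc H a k * (Di k l * ξ i l c) ≤ |H a k * (Di k l * ξ i l c)| := le_abs_self _
      _ = |H a k| * (|Di k l| * |ξ i l c|) := by rw [abs_mul, abs_mul]
      _ ≤ |H a k| * (Δ i k l * |ξ i l c|) := by
          gcongr
          simpa using hDi k l
end
end

section
/- One-step entry into the terminal set: in the setting of the feasibility problem below, suppose (1, z(·), v(·)) is feasible at x ∈ ℝ^n with horizon N = 1. Then for every A ∈ ℝ^{n×n}, B ∈ ℝ^{n×m} with |[A B] − [Â B̂]| ≤ Δ_S entrywise and every w ∈ 𝒲, the successor state x⁺ = Ax + Bv(0) + w belongs to 𝒳_f. -/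
open Matrix Finset Pointwise

noncomputable section

/-- `ℐ^Δ(j) = [± Σ_{i=0}^{j} |Â_K^{j−i}| F_i]` -/
def IDelta {n m : ℕ} (AhK : Matrix (Fin n) (Fin n) ℝ)
    (FΔ : ℕ → Matrix (Fin n) (Fin n ⊕ Fin m) ℝ) (j : ℕ) :
    Set (Matrix (Fin n) (Fin n ⊕ Fin m) ℝ) :=
  intervalMat 0 (∑ i ∈ Finset.range (j + 1), matAbs (AhK ^ (j - i)) * FΔ i)

/-- `ℐ^𝒲(j) = [± Σ_{i=0}^{j} |Â_K^{j−i}| F^𝒲_i]`, a set of (column) vectors of `ℝ^n` -/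
def IWvec {n : ℕ} (AhK : Matrix (Fin n) (Fin n) ℝ)
    (FW : ℕ → Matrix (Fin n) (Fin 1) ℝ) (j : ℕ) : Set (Matrix (Fin n) (Fin 1) ℝ) :=
  intervalMat 0 (∑ i ∈ Finset.range (j + 1), matAbs (AhK ^ (j - i)) * FW i)

/-- the tube `ℬ(j) = Σ_{i<j} ℐ^Δ(j−i−1)[z(i); v(i)] ⊕ Σ_{i<j} ℐ^𝒲(i)` -/
def Btube {n m : ℕ} (AhK : Matrix (Fin n) (Fin n) ℝ)
    (FΔ : ℕ → Matrix (Fin n) (Fin n ⊕ Fin m) ℝ) (FW : ℕ → Matrix (Fin n) (Fin 1) ℝ)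
    (z : ℕ → Matrix (Fin n) (Fin 1) ℝ) (v : ℕ → Matrix (Fin m) (Fin 1) ℝ) (j : ℕ) :
    Set (Matrix (Fin n) (Fin 1) ℝ) :=
  (∑ i ∈ Finset.range j,
    (fun D => D * Matrix.fromRows (z i) (v i)) '' IDelta AhK FΔ (j - i - 1)) +
  ∑ i ∈ Finset.range j, IWvec AhK FW i

/-- feasibility of `(N, z(·), v(·))` at `x` for the variable-horizon robust control problem -/
def Feasible {n m : ℕ} (Ah : Matrix (Fin n) (Fin n) ℝ) (Bh : Matrix (Fin n) (Fin m) ℝ)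
    (K : Matrix (Fin m) (Fin n) ℝ)
    (FΔ : ℕ → Matrix (Fin n) (Fin n ⊕ Fin m) ℝ) (FW : ℕ → Matrix (Fin n) (Fin 1) ℝ)
    (X : Set (Matrix (Fin n) (Fin 1) ℝ)) (U : Set (Matrix (Fin m) (Fin 1) ℝ))
    (Xf : Set (Matrix (Fin n) (Fin 1) ℝ)) (x : Matrix (Fin n) (Fin 1) ℝ) (N : ℕ)
    (z : ℕ → Matrix (Fin n) (Fin 1) ℝ) (v : ℕ → Matrix (Fin m) (Fin 1) ℝ) : Prop :=
  1 ≤ N ∧ z 0 = x ∧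
  (∀ j < N, z (j + 1) = Ah * z j + Bh * v j) ∧
  (∀ j ≤ N, {z j} + Btube (Ah + Bh * K) FΔ FW z v j ⊆ X) ∧
  (∀ j < N, {v j} + (fun e => K * e) '' Btube (Ah + Bh * K) FΔ FW z v j ⊆ U) ∧
  {z N} + Btube (Ah + Bh * K) FΔ FW z v N ⊆ Xf

/-- one-step entry into the terminal set. -/
theorem stmt16 {n m : ℕ}
    (Ah : Matrix (Fin n) (Fin n) ℝ) (Bh : Matrix (Fin n) (Fin m) ℝ)
    (K : Matrix (Fin m) (Fin n) ℝ)
    (ΔS : Matrix (Fin n) (Fin n ⊕ Fin m) ℝ) (hΔS : ∀ i j, 0 ≤ ΔS i j)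
    (wbar : Fin n → ℝ) (hwbar : ∀ i, 0 ≤ wbar i)
    (FΔ : ℕ → Matrix (Fin n) (Fin n ⊕ Fin m) ℝ) (hFΔ0 : FΔ 0 = ΔS)
    (hFΔ : ∀ j, FΔ (j + 1) =
      (ΔS.submatrix id Sum.inl + ΔS.submatrix id Sum.inr * matAbs K) *
        ∑ i ∈ Finset.range (j + 1), matAbs ((Ah + Bh * K) ^ (j - i)) * FΔ i)
    (FW : ℕ → Matrix (Fin n) (Fin 1) ℝ) (hFW0 : FW 0 = colVec wbar)
    (hFW : ∀ j, FW (j + 1) =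
      (ΔS.submatrix id Sum.inl + ΔS.submatrix id Sum.inr * matAbs K) *
        ∑ i ∈ Finset.range (j + 1), matAbs ((Ah + Bh * K) ^ (j - i)) * FW i)
    (X : Set (Matrix (Fin n) (Fin 1) ℝ)) (U : Set (Matrix (Fin m) (Fin 1) ℝ))
    (Xf : Set (Matrix (Fin n) (Fin 1) ℝ))
    (x : Matrix (Fin n) (Fin 1) ℝ)
    (z : ℕ → Matrix (Fin n) (Fin 1) ℝ) (v : ℕ → Matrix (Fin m) (Fin 1) ℝ)
    (hfeas : Feasible Ah Bh K FΔ FW X U Xf x 1 z v) :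
    ∀ (A : Matrix (Fin n) (Fin n) ℝ) (B : Matrix (Fin n) (Fin m) ℝ),
      (∀ i j, |Matrix.fromCols A B i j - Matrix.fromCols Ah Bh i j| ≤ ΔS i j) →
      ∀ w ∈ intervalMat 0 (colVec wbar), A * x + B * v 0 + w ∈ Xf := by
  obtain ⟨-, hz0, hzstep, -, -, hXf⟩ := hfeas
  intro A B hAB w hw
  set AhK := Ah + Bh * K with hAhK
  have h1 : matAbs (AhK ^ 0) = 1 := by
    ext i j
    simp only [pow_zero, matAbs, Matrix.one_apply]
    split <;> simp
  have hz1 : z 1 = Ah * x + Bh * v 0 := by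
    rw [← hz0]; exact hzstep 0 (by norm_num)
  set D : Matrix (Fin n) (Fin n ⊕ Fin m) ℝ := Matrix.fromCols (A - Ah) (B - Bh) with hDdef
  have hD : D ∈ IDelta AhK FΔ 0 := by
    intro i j
    rw [Finset.sum_range_one]
    simp only [Nat.sub_zero, h1, Matrix.one_mul, hFΔ0, Matrix.zero_apply, sub_zero]
    have := hAB i j
    cases j <;>
      simpa [hDdef, Matrix.fromCols, Matrix.sub_apply] using this
  have hwmem : w ∈ IWvec AhK FW 0 := by
    intro i j
    rw [Finset.sum_range_one]
    simp only [Nat.sub_zero, h1, Matrix.one_mul, hFW0]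
    exact hw i j
  have key : A * x + B * v 0 + w = z 1 + (D * Matrix.fromRows (z 0) (v 0) + w) := by
    rw [hz0, hDdef, Matrix.fromCols_mul_fromRows, hz1]
    rw [Matrix.sub_mul, Matrix.sub_mul]
    abel
  rw [key]
  apply hXf
  refine Set.add_mem_add (Set.mem_singleton _) ?_
  unfold Btube
  rw [Finset.sum_range_one, Finset.sum_range_one]
  exact Set.add_mem_add ⟨D, hD, rfl⟩ hwmem
end
end
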